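/- If a 2-connected graph contains a cycle on k vertices, then between any pair of distinct vertices of the graph there is a path of length at least ⌈k/2⌉. -/

import Mathlib

/-- A graph is 2-connected. -/
def TwoConnected {V : Type*} [Fintype V] (G : SimpleGraph V) : Prop :=
  G.Connected ∧ 3 ≤ Fintype.card V ∧ ∀ v : V, (G.induce ({v}ᶜ : Set V)).Connected

section Aux

open SimpleGraph Walk

variable {V : Type*} [DecidableEq V] {G : SimpleGraph V}

/-- appending two paths whose supports meet only in the junction gives a path -/
lemma myAppendPath {u v w : V} {p : G.Walk u v} {q : G.Walk v w} (hp : p.IsPath)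
    (hq : q.IsPath) (h : ∀ x, x ∈ p.support → x ∈ q.support → x = v) :
    (p.append q).IsPath := by
  rw [isPath_def, support_append, List.nodup_append]
  refine ⟨hp.support_nodup, ?_, ?_⟩
  · have := hq.support_nodup
    rw [q.support_eq_cons] at this
    exact this.of_cons
  · intro x hx _ hx' rfl
    have hxv : x = v := h x hx (List.mem_of_mem_tail hx')
    subst hxv
    have := hq.support_nodup
    rw [q.support_eq_cons] at this
    exact (List.nodup_cons.mp this).1 hx'

lemma myMemClosedTail {v x : V} {c : G.Walk v v} (h : ¬c.Nil) :
    x ∈ c.support ↔ x ∈ c.support.tail := by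
  cases c with
  | nil => simp at h
  | cons h' c' =>
    simp only [support_cons, List.tail_cons, List.mem_cons]
    constructor
    · rintro (rfl | hx)
      · exact c'.end_mem_support
      · exact hx
    · intro hx; exact Or.inr hx

lemma myLengthRotate {v u : V} {c : G.Walk v v} (h : u ∈ c.support) :
    (c.rotate u h).length = c.length := by
  rw [SimpleGraph.Walk.rotate, length_append, add_comm, ← length_append, take_spec]

lemma myMemRotate {v u x : V} {c : G.Walk v v} (hc : c.IsCycle) (h : u ∈ c.support) :
    x ∈ (c.rotate u h).support ↔ x ∈ c.support := by
  rw [myMemClosedTail (hc.rotate h).not_nil, myMemClosedTail hc.not_nil]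
  exact (support_rotate c u h).mem_iff

set_option linter.unusedSectionVars false

/-- A 2-connected graph admits, between any two vertices different from `x`,
a path avoiding `x`. -/
lemma myAvoid {W : Type*} [Fintype W] [DecidableEq W] {H : SimpleGraph W}
    (h2 : TwoConnected H)
    (x u w : W) (hu : u ≠ x) (hw : w ≠ x) :
    ∃ p : H.Walk u w, p.IsPath ∧ x ∉ p.support := by
  have hconn := h2.2.2 x
  have hu' : u ∈ ({x}ᶜ : Set W) := by simp [hu]
  have hw' : w ∈ ({x}ᶜ : Set W) := by simp [hw]
  obtain ⟨q⟩ := hconn ⟨u, hu'⟩ ⟨w, hw'⟩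
  let f := SimpleGraph.Embedding.induce (G := H) ({x}ᶜ : Set W)
  let p0 := q.map f.toHom
  refine ⟨p0.bypass, p0.bypass_isPath, fun hx => ?_⟩
  have hx' := p0.support_bypass_subset hx
  simp only [p0, Walk.support_map, List.mem_map] at hx'
  obtain ⟨⟨y, hy⟩, _, h2'⟩ := hx'
  apply hy
  simp [f] at h2'
  simp [h2']

/-- First-hit truncation of a path into a set. -/
lemma myFirstHit (Sset : V → Prop) {u v : V} (p : G.Walk u v) : p.IsPath → Sset v →
    ∃ (w : V) (q : G.Walk u w), q.IsPath ∧ Sset w ∧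
      (∀ y ∈ q.support, Sset y → y = w) ∧ (∀ y ∈ q.support, y ∈ p.support) := by
  induction p with
  | nil =>
    intro _ hv
    exact ⟨_, Walk.nil, by simp, hv, by simp, by simp⟩
  | @cons a b c h p ih =>
    intro hp hv
    by_cases ha : Sset a
    · exact ⟨a, Walk.nil, by simp, ha, by simp, by simp⟩
    · obtain ⟨w, q, hq, hw, hfirst, hsub⟩ := ih (hp.of_cons) hv
      have hans : a ∉ p.support := ((Walk.cons_isPath_iff h p).mp hp).2
      refine ⟨w, Walk.cons h q, ?_, hw, ?_, ?_⟩
      · rw [Walk.cons_isPath_iff]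
        exact ⟨hq, fun hc => hans (hsub a hc)⟩
      · intro y hy hSy
        rcases (by simpa using hy : y = a ∨ y ∈ q.support) with rfl | hy'
        · exact absurd hSy ha
        · exact hfirst y hy' hSy
      · intro y hy
        rcases (by simpa using hy : y = a ∨ y ∈ q.support) with rfl | hy'
        · simp
        · simp [hsub y hy']

/-- the two pieces of a path split at a vertex meet only at that vertex -/
lemma mySplitDisj {a b z : V} {P : G.Walk a b} (hP : P.IsPath) (hz : z ∈ P.support) :
    ∀ x, x ∈ (P.takeUntil z hz).support → x ∈ (P.dropUntil z hz).support → x = z := by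
  intro x hx hx'
  have hnd := hP.support_nodup
  rw [← P.take_spec hz, support_append, List.nodup_append] at hnd
  have h2 : x = z ∨ x ∈ (P.dropUntil z hz).support.tail := by
    have h3 := hx'
    rw [(P.dropUntil z hz).support_eq_cons] at h3
    exact List.mem_cons.mp h3
  rcases h2 with h | h
  · exact h
  · exact absurd rfl (hnd.2.2 x hx x h)

/-- Splitting a cycle at a second vertex gives two arcs: paths in opposite directions
meeting only at the two vertices, with lengths summing to the cycle length. -/
lemma mySplit2 {a b : V} {c : G.Walk a a} (hc : c.IsCycle) (hb : b ∈ c.support)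
    (hab : a ≠ b) :
    ∃ (P : G.Walk a b) (Q : G.Walk b a), P.IsPath ∧ Q.IsPath ∧
      (∀ x ∈ P.support, x ∈ c.support) ∧ (∀ x ∈ Q.support, x ∈ c.support) ∧
      (∀ x, x ∈ P.support → x ∈ Q.support → (x = a ∨ x = b)) ∧
      P.length + Q.length = c.length ∧
      (∀ x ∈ c.support, x ∈ P.support ∨ x ∈ Q.support) := by
  set P := c.takeUntil b hb with hP
  set Q := c.dropUntil b hb with hQ
  have hspec : P.append Q = c := c.take_spec hb
  have hTnd : c.support.tail.Nodup := hc.2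
  have hsupp : c.support = P.support ++ Q.support.tail := by
    rw [← hspec, support_append]
  have hcons : c.support = a :: c.support.tail := c.support_eq_cons
  have hPcons : P.support = a :: P.support.tail := P.support_eq_cons
  have htail : c.support.tail = P.support.tail ++ Q.support.tail := by
    have : a :: c.support.tail = (a :: P.support.tail) ++ Q.support.tail := by
      rw [← hcons, ← hPcons, ← hsupp]
    simpa only [List.cons_append, List.cons.injEq, true_and] using this
  have hnd : (P.support.tail ++ Q.support.tail).Nodup := htail ▸ hTnd
  rw [List.nodup_append] at hnd
  have haQ : a ∈ Q.support.tail := Q.end_mem_tail_support_of_ne (Ne.symm hab)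
  have haP : a ∉ P.support.tail := fun h => hnd.2.2 a h a haQ rfl
  have hbP : b ∈ P.support.tail := by
    have := P.end_mem_support
    rw [hPcons] at this
    rcases List.mem_cons.mp this with h | h
    · exact absurd h.symm hab
    · exact h
  have hbQ : b ∉ Q.support.tail := fun h => hnd.2.2 b hbP b h rfl
  have hPpath : P.IsPath := by
    rw [isPath_def, hPcons]
    exact List.nodup_cons.mpr ⟨haP, hnd.1⟩
  have hQpath : Q.IsPath := by
    rw [isPath_def, Q.support_eq_cons]
    exact List.nodup_cons.mpr ⟨hbQ, hnd.2.1⟩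
  refine ⟨P, Q, hPpath, hQpath, fun x hx => c.support_takeUntil_subset hb hx,
    fun x hx => c.support_dropUntil_subset hb hx, ?_, ?_⟩
  · intro x hxP hxQ
    rw [hPcons] at hxP
    rcases List.mem_cons.mp hxP with h | h
    · exact Or.inl h
    · rw [Q.support_eq_cons] at hxQ
      rcases List.mem_cons.mp hxQ with h' | h'
      · exact Or.inr h'
      · exact absurd rfl (hnd.2.2 x h x h')
  · constructor
    · have := congrArg Walk.length hspec
      rwa [length_append] at this
    · intro x hx
      rw [hsupp, List.mem_append] at hx
      rcases hx with h | h
      · exact Or.inl h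
      · exact Or.inr (List.mem_of_mem_tail h)

/-- the longer arc of a cycle between two of its vertices -/
lemma myArc2 {a b : V} {c : G.Walk a a} (hc : c.IsCycle) (hb : b ∈ c.support)
    (hab : a ≠ b) :
    ∃ W : G.Walk a b, W.IsPath ∧ (∀ x ∈ W.support, x ∈ c.support) ∧
      (c.length + 1) / 2 ≤ W.length := by
  obtain ⟨P, Q, hP, hQ, hPs, hQs, _, hlen, _⟩ := mySplit2 hc hb hab
  rcases le_or_gt ((c.length + 1) / 2) P.length with h | h
  · exact ⟨P, hP, hPs, h⟩
  · refine ⟨Q.reverse, hQ.reverse, ?_, ?_⟩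
    · intro x hx
      rw [support_reverse, List.mem_reverse] at hx
      exact hQs x hx
    · rw [length_reverse]
      omega

/-- given three vertices on a cycle, there is a path in the cycle from the first to one of
the other two, of length at least half the cycle length -/
lemma myArc3 {a z1 z2 : V} {c : G.Walk a a} (hc : c.IsCycle) (h1 : z1 ∈ c.support)
    (h2 : z2 ∈ c.support) (ha1 : a ≠ z1) (ha2 : a ≠ z2) (h12 : z1 ≠ z2) :
    ∃ (z' : V) (W : G.Walk a z'), (z' = z1 ∨ z' = z2) ∧ W.IsPath ∧
      (∀ x ∈ W.support, x ∈ c.support) ∧ (c.length + 1) / 2 ≤ W.length := by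
  obtain ⟨P, Q, hP, hQ, hPs, hQs, hPQ, hlen, hcover⟩ := mySplit2 hc h1 ha1
  rcases hcover z2 h2 with hz2 | hz2
  · -- z2 lies on the arc P from a to z1
    have hP2 : (P.dropUntil z2 hz2).IsPath := hP.dropUntil hz2
    have hlenP : (P.takeUntil z2 hz2).length + (P.dropUntil z2 hz2).length = P.length := by
      have := congrArg Walk.length (P.take_spec hz2)
      rwa [length_append] at this
    rcases le_or_gt ((c.length + 1) / 2) P.length with h | h
    · exact ⟨z1, P, Or.inl rfl, hP, hPs, h⟩
    · have haP2 : a ∉ (P.dropUntil z2 hz2).support := by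
        intro hcon
        exact ha2 (mySplitDisj hP hz2 a (P.takeUntil z2 hz2).start_mem_support hcon)
      have hW : (Q.reverse.append (P.dropUntil z2 hz2).reverse).IsPath := by
        refine myAppendPath hQ.reverse hP2.reverse (fun x hx hx' => ?_)
        rw [support_reverse, List.mem_reverse] at hx hx'
        have hxP : x ∈ P.support := P.support_dropUntil_subset hz2 hx'
        rcases hPQ x hxP hx with rfl | rfl
        · exact absurd hx' haP2
        · rfl
      refine ⟨z2, _, Or.inr rfl, hW, ?_, ?_⟩
      · intro x hx
        rw [mem_support_append_iff] at hx
        rcases hx with hx | hx <;> rw [support_reverse, List.mem_reverse] at hx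
        · exact hQs x hx
        · exact hPs x (P.support_dropUntil_subset hz2 hx)
      · rw [length_append, length_reverse, length_reverse]
        omega
  · -- z2 lies on the arc Q from z1 back to a
    have hQ1 : (Q.takeUntil z2 hz2).IsPath := hQ.takeUntil hz2
    have hlenQ : (Q.takeUntil z2 hz2).length + (Q.dropUntil z2 hz2).length = Q.length := by
      have := congrArg Walk.length (Q.take_spec hz2)
      rwa [length_append] at this
    rcases le_or_gt ((c.length + 1) / 2) Q.length with h | h
    · refine ⟨z1, Q.reverse, Or.inl rfl, hQ.reverse, ?_, by rw [length_reverse]; exact h⟩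
      intro x hx
      rw [support_reverse, List.mem_reverse] at hx
      exact hQs x hx
    · have haQ1 : a ∉ (Q.takeUntil z2 hz2).support := by
        intro hcon
        exact ha2 (mySplitDisj hQ hz2 a hcon (Q.dropUntil z2 hz2).end_mem_support)
      have hW : (P.append (Q.takeUntil z2 hz2)).IsPath := by
        refine myAppendPath hP hQ1 (fun x hx hx' => ?_)
        have hxQ : x ∈ Q.support := Q.support_takeUntil_subset hz2 hx'
        rcases hPQ x hx hxQ with rfl | rfl
        · exact absurd hx' haQ1
        · rfl
      refine ⟨z2, _, Or.inr rfl, hW, ?_, ?_⟩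
      · intro x hx
        rw [mem_support_append_iff] at hx
        rcases hx with hx | hx
        · exact hPs x hx
        · exact hQs x (Q.support_takeUntil_subset hz2 hx)
      · rw [length_append]
        omega

/-- two paths from `v` to the endpoints of an edge, meeting only at `v`,
each avoiding the other endpoint -/
def myConcl (G : SimpleGraph V) (v x y : V) : Prop :=
  ∃ (R1 : G.Walk v x) (R2 : G.Walk v y), R1.IsPath ∧ R2.IsPath ∧
    (∀ a, a ∈ R1.support → a ∈ R2.support → a = v) ∧ y ∉ R1.support ∧ x ∉ R2.support

lemma mySwap {v x y : V} (h : myConcl G v x y) : myConcl G v y x := by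
  obtain ⟨R1, R2, h1, h2, h3, h4, h5⟩ := h
  exact ⟨R2, R1, h2, h1, fun a ha hb => h3 a hb ha, h5, h4⟩

lemma myHA {w x y v : V} {S1 : G.Walk w x} {S2 : G.Walk w y}
    (hS1 : S1.IsPath) (hS2 : S2.IsPath)
    (hint : ∀ a, a ∈ S1.support → a ∈ S2.support → a = w)
    (hyS1 : y ∉ S1.support) (hxS2 : x ∉ S2.support)
    (hv : v ∈ S1.support) (hvx : v ≠ x) (hvw : v ≠ w) : myConcl G v x y := by
  have hdisj := mySplitDisj hS1 hv
  have hT : (S1.takeUntil v hv).IsPath := hS1.takeUntil hv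
  have hxT : x ∉ (S1.takeUntil v hv).support := by
    intro hcon
    exact hvx (hdisj x hcon (S1.dropUntil v hv).end_mem_support).symm
  refine ⟨S1.dropUntil v hv, (S1.takeUntil v hv).reverse.append S2,
    hS1.dropUntil hv, ?_, ?_, ?_, ?_⟩
  · refine myAppendPath hT.reverse hS2 (fun b hb hb' => ?_)
    rw [support_reverse, List.mem_reverse] at hb
    exact hint b (S1.support_takeUntil_subset hv hb) hb'
  · intro a ha ha'
    rw [mem_support_append_iff] at ha'
    rcases ha' with ha' | ha'
    · rw [support_reverse, List.mem_reverse] at ha'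
      exact hdisj a ha' ha
    · have haw : a = w := hint a (S1.support_dropUntil_subset hv ha) ha'
      subst haw
      exact absurd (hdisj a (S1.takeUntil v hv).start_mem_support ha) hvw.symm
  · exact fun hcon => hyS1 (S1.support_dropUntil_subset hv hcon)
  · intro hcon
    rw [mem_support_append_iff] at hcon
    rcases hcon with hcon | hcon
    · rw [support_reverse, List.mem_reverse] at hcon
      exact hxT hcon
    · exact hxS2 hcon

lemma myHB {w x y v z : V} {S1 : G.Walk w x} {S2 : G.Walk w y} {B : G.Walk v z}
    (hS1 : S1.IsPath) (hS2 : S2.IsPath)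
    (hint : ∀ a, a ∈ S1.support → a ∈ S2.support → a = w)
    (hyS1 : y ∉ S1.support) (hxS2 : x ∉ S2.support)
    (hadj : G.Adj v w) (hvS1 : v ∉ S1.support) (hvS2 : v ∉ S2.support) (hvx : v ≠ x)
    (hB : B.IsPath) (hzS1 : z ∈ S1.support) (hzw : z ≠ w) (hwB : w ∉ B.support)
    (hBU : ∀ b ∈ B.support, (b ∈ S1.support ∨ b ∈ S2.support) → b = z) :
    myConcl G v x y := by
  have hdisj := mySplitDisj hS1 hzS1
  refine ⟨B.append (S1.dropUntil z hzS1), Walk.cons hadj S2, ?_, ?_, ?_, ?_, ?_⟩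
  · refine myAppendPath hB (hS1.dropUntil hzS1) (fun b hb hb' => ?_)
    exact hBU b hb (Or.inl (S1.support_dropUntil_subset hzS1 hb'))
  · rw [Walk.cons_isPath_iff]
    exact ⟨hS2, hvS2⟩
  · intro a ha ha'
    rcases List.mem_cons.mp (by simpa using ha' : a ∈ v :: S2.support) with h | h
    · exact h
    · exfalso
      rw [mem_support_append_iff] at ha
      rcases ha with ha | ha
      · have : a = z := hBU a ha (Or.inr h)
        subst this
        exact hzw (hint a hzS1 h)
      · have haw : a = w := hint a (S1.support_dropUntil_subset hzS1 ha) h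
        subst haw
        exact hzw (hdisj a (S1.takeUntil z hzS1).start_mem_support ha).symm
  · intro hcon
    rw [mem_support_append_iff] at hcon
    rcases hcon with hcon | hcon
    · have : y = z := hBU y hcon (Or.inr S2.end_mem_support)
      subst this
      exact hyS1 hzS1
    · exact hyS1 (S1.support_dropUntil_subset hzS1 hcon)
  · intro hcon
    rcases List.mem_cons.mp (by simpa using hcon : x ∈ v :: S2.support) with h | h
    · exact hvx h.symm
    · exact hxS2 h

variable [Fintype V]

/-- every vertex not on an edge is joined to the two endpoints of the edge by two
paths meeting only at the vertex (hence the edge and the vertex lie on a common cycle) -/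
lemma myM1 (h2 : TwoConnected G) {x y : V} (hxy : G.Adj x y) :
    ∀ (n : ℕ) (v : V) (p : G.Walk v x), p.length = n → v ≠ x → v ≠ y →
      myConcl G v x y := by
  intro n
  induction n using Nat.strong_induction_on with
  | _ n ih =>
  intro v p hlen hvx hvy
  cases p with
  | nil => exact absurd rfl hvx
  | @cons _ w _ h p' =>
    by_cases hwx : w = x
    · rcases hwx with rfl
      obtain ⟨R2, hR2, hxR2⟩ := myAvoid h2 w v y hvx hxy.ne.symm
      refine ⟨Walk.cons h Walk.nil, R2, ?_, hR2, ?_, ?_, hxR2⟩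
      · rw [Walk.cons_isPath_iff]
        simpa using hvx
      · intro a ha ha'
        rcases List.mem_cons.mp (by simpa using ha : a ∈ v :: [w]) with h' | h'
        · exact h'
        · simp only [List.mem_singleton] at h'
          subst h'
          exact absurd ha' hxR2
      · intro hcon
        rcases List.mem_cons.mp (by simpa using hcon : y ∈ v :: [w]) with h' | h'
        · exact hvy h'.symm
        · simp only [List.mem_singleton] at h'
          exact hxy.ne h'.symm
    · by_cases hwy : w = y
      · rcases hwy with rfl
        obtain ⟨R1, hR1, hyR1⟩ := myAvoid h2 w v x hvy hxy.ne
        refine ⟨R1, Walk.cons h Walk.nil, hR1, ?_, ?_, hyR1, ?_⟩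
        · rw [Walk.cons_isPath_iff]
          simpa using hvy
        · intro a ha ha'
          rcases List.mem_cons.mp (by simpa using ha' : a ∈ v :: [w]) with h' | h'
          · exact h'
          · simp only [List.mem_singleton] at h'
            subst h'
            exact absurd ha hyR1
        · intro hcon
          rcases List.mem_cons.mp (by simpa using hcon : x ∈ v :: [w]) with h' | h'
          · exact hvx h'.symm
          · simp only [List.mem_singleton] at h'
            exact hxy.ne h'
      · have hlt : p'.length < n := by
          rw [← hlen]; simp [Walk.length_cons]
        obtain ⟨S1, S2, hS1, hS2, hint, hyS1, hxS2⟩ :=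
          ih p'.length hlt w p' rfl hwx hwy
        by_cases hvS1 : v ∈ S1.support
        · exact myHA hS1 hS2 hint hyS1 hxS2 hvS1 hvx h.ne
        · by_cases hvS2 : v ∈ S2.support
          · exact mySwap (myHA hS2 hS1 (fun a ha hb => hint a hb ha) hxS2 hyS1 hvS2 hvy h.ne)
          · obtain ⟨Q0, hQ0, hwQ0⟩ := myAvoid h2 w v x h.ne (fun e => hwx e.symm)
            obtain ⟨z, B, hB, hz, hfirst, hsub⟩ :=
              myFirstHit (fun b => b ∈ S1.support ∨ b ∈ S2.support) Q0 hQ0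
                (Or.inl S1.end_mem_support)
            have hwB : w ∉ B.support := fun hc => hwQ0 (hsub w hc)
            have hzw : z ≠ w := fun e => hwB (e ▸ B.end_mem_support)
            rcases hz with hz1 | hz2
            · exact myHB hS1 hS2 hint hyS1 hxS2 h hvS1 hvS2 hvx hB hz1 hzw hwB hfirst
            · exact mySwap (myHB hS2 hS1 (fun a ha hb => hint a hb ha) hxS2 hyS1 h
                hvS2 hvS1 hvy hB hz2 hzw hwB
                (fun b hb hd => hfirst b hb hd.symm))

/-- Fan lemma: from any vertex off a cycle there are two paths to the cycle which meet
the cycle exactly at their (distinct) endpoints and meet each other only at the vertex. -/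
lemma myFan (h2 : TwoConnected G) {a : V} {c : G.Walk a a} (hc : c.IsCycle) {s : V}
    (hs : s ∉ c.support) :
    ∃ (z1 z2 : V) (A1 : G.Walk s z1) (A2 : G.Walk s z2), z1 ≠ z2 ∧
      z1 ∈ c.support ∧ z2 ∈ c.support ∧ A1.IsPath ∧ A2.IsPath ∧
      (∀ x ∈ A1.support, x ∈ c.support → x = z1) ∧
      (∀ x ∈ A2.support, x ∈ c.support → x = z2) ∧
      (∀ x, x ∈ A1.support → x ∈ A2.support → x = s) := by
  cases c with
  | nil => exact absurd hc.not_nil (by simp)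
  | @cons _ b _ h c' =>
    have hac : a ∈ (Walk.cons h c').support := Walk.start_mem_support _
    have hbc : b ∈ (Walk.cons h c').support := by
      rw [support_cons]
      exact List.mem_cons_of_mem _ c'.start_mem_support
    have hsa : s ≠ a := fun e => hs (e ▸ hac)
    have hsb : s ≠ b := fun e => hs (e ▸ hbc)
    obtain ⟨p⟩ := h2.1.preconnected s a
    obtain ⟨R1, R2, hR1, hR2, hint, _, _⟩ := myM1 h2 h p.length s p rfl hsa hsb
    obtain ⟨z1, A1, hA1, hz1, hfirst1, hsub1⟩ :=
      myFirstHit (fun u => u ∈ (Walk.cons h c').support) R1 hR1 hac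
    obtain ⟨z2, A2, hA2, hz2, hfirst2, hsub2⟩ :=
      myFirstHit (fun u => u ∈ (Walk.cons h c').support) R2 hR2 hbc
    have hne : z1 ≠ z2 := by
      intro e
      subst e
      have : z1 = s := hint z1 (hsub1 z1 A1.end_mem_support) (hsub2 z1 A2.end_mem_support)
      exact hs (this ▸ hz1)
    exact ⟨z1, z2, A1, A2, hne, hz1, hz2, hA1, hA2, hfirst1, hfirst2,
      fun x hx hx' => hint x (hsub1 x hx) (hsub2 x hx')⟩

/-- long arc between two vertices of a cycle -/
lemma myArcA {v a b : V} {c : G.Walk v v} (hc : c.IsCycle) (ha : a ∈ c.support)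
    (hb : b ∈ c.support) (hab : a ≠ b) :
    ∃ W : G.Walk a b, W.IsPath ∧ (∀ x ∈ W.support, x ∈ c.support) ∧
      (c.length + 1) / 2 ≤ W.length := by
  have hb' : b ∈ (c.rotate a ha).support := (myMemRotate hc ha).mpr hb
  obtain ⟨W, hW, hWs, hWl⟩ := myArc2 (hc.rotate ha) hb' hab
  exact ⟨W, hW, fun x hx => (myMemRotate hc ha).mp (hWs x hx),
    by rwa [myLengthRotate ha] at hWl⟩

/-- long arc from a vertex of a cycle to one of two other given vertices -/
lemma myArcB {v a z1 z2 : V} {c : G.Walk v v} (hc : c.IsCycle) (ha : a ∈ c.support)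
    (h1 : z1 ∈ c.support) (h2 : z2 ∈ c.support) (ha1 : a ≠ z1) (ha2 : a ≠ z2)
    (h12 : z1 ≠ z2) :
    ∃ (z' : V) (W : G.Walk a z'), (z' = z1 ∨ z' = z2) ∧ W.IsPath ∧
      (∀ x ∈ W.support, x ∈ c.support) ∧ (c.length + 1) / 2 ≤ W.length := by
  obtain ⟨z', W, hz', hW, hWs, hWl⟩ := myArc3 (hc.rotate ha)
    ((myMemRotate hc ha).mpr h1) ((myMemRotate hc ha).mpr h2) ha1 ha2 h12
  exact ⟨z', W, hz', hW, fun x hx => (myMemRotate hc ha).mp (hWs x hx),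
    by rwa [myLengthRotate ha] at hWl⟩

/-- the case where `s` is on the cycle and `t` is not -/
lemma myStep2 (h2 : TwoConnected G) {v : V} {c : G.Walk v v} (hc : c.IsCycle) {s t : V}
    (hsS : s ∈ c.support) (htS : t ∉ c.support) (hst : s ≠ t) :
    ∃ p : G.Walk s t, p.IsPath ∧ (c.length + 1) / 2 ≤ p.length := by
  obtain ⟨z1, z2, A1, A2, h12, hz1, hz2, hA1, hA2, hf1, hf2, hint⟩ := myFan h2 hc htS
  have finish : ∀ (z' : V) (A : G.Walk t z') (W : G.Walk s z'), A.IsPath →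
      (∀ x ∈ A.support, x ∈ c.support → x = z') → W.IsPath →
      (∀ x ∈ W.support, x ∈ c.support) → (c.length + 1) / 2 ≤ W.length →
      ∃ p : G.Walk s t, p.IsPath ∧ (c.length + 1) / 2 ≤ p.length := by
    intro z' A W hA hfA hW hWs hWl
    refine ⟨W.append A.reverse, ?_, ?_⟩
    · refine myAppendPath hW hA.reverse (fun x hx hx' => ?_)
      rw [support_reverse, List.mem_reverse] at hx'
      exact hfA x hx' (hWs x hx)
    · rw [length_append]
      omega
  by_cases hs1 : s = z1
  · subst hs1
    obtain ⟨W, hW, hWs, hWl⟩ := myArcA hc hsS hz2 h12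
    exact finish z2 A2 W hA2 hf2 hW hWs hWl
  · by_cases hs2 : s = z2
    · subst hs2
      obtain ⟨W, hW, hWs, hWl⟩ := myArcA hc hsS hz1 (Ne.symm h12)
      exact finish z1 A1 W hA1 hf1 hW hWs hWl
    · obtain ⟨z', W, hz', hW, hWs, hWl⟩ := myArcB hc hsS hz1 hz2 hs1 hs2 h12
      rcases hz' with rfl | rfl
      · exact finish z' A1 W hA1 hf1 hW hWs hWl
      · exact finish z' A2 W hA2 hf2 hW hWs hWl

/-- the case where neither `s` nor `t` is on the cycle -/
lemma myStep4 (h2 : TwoConnected G) {v : V} {c : G.Walk v v} (hc : c.IsCycle) {s t : V}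
    (hsS : s ∉ c.support) (htS : t ∉ c.support) (hst : s ≠ t) :
    ∃ p : G.Walk s t, p.IsPath ∧ (c.length + 1) / 2 ≤ p.length := by
  obtain ⟨x1, x2, A1, A2, h12, hx1S, hx2S, hA1, hA2, hf1, hf2, hint⟩ := myFan h2 hc hsS
  -- generic construction when t lies on one of the fan paths
  have onFan : ∀ (y1 y2 : V) (C1 : G.Walk s y1) (C2 : G.Walk s y2), y1 ≠ y2 →
      y1 ∈ c.support → y2 ∈ c.support → C1.IsPath → C2.IsPath →
      (∀ u ∈ C1.support, u ∈ c.support → u = y1) →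
      (∀ u ∈ C2.support, u ∈ c.support → u = y2) →
      (∀ u, u ∈ C1.support → u ∈ C2.support → u = s) →
      ∀ ht : t ∈ C1.support,
      ∃ p : G.Walk s t, p.IsPath ∧ (c.length + 1) / 2 ≤ p.length := by
    intro y1 y2 C1 C2 hy12 hy1 hy2 hC1 hC2 hfC1 hfC2 hintC ht
    obtain ⟨W2, hW2, hW2s, hW2l⟩ := myArcA hc hy2 hy1 (Ne.symm hy12)
    have hsF : s ∉ (C1.dropUntil t ht).support := by
      intro hcon
      exact hst (mySplitDisj hC1 ht s (C1.takeUntil t ht).start_mem_support hcon)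
    have hq1 : (C2.append W2).IsPath := by
      refine myAppendPath hC2 hW2 (fun u hu hu' => ?_)
      exact hfC2 u hu (hW2s u hu')
    refine ⟨(C2.append W2).append (C1.dropUntil t ht).reverse, ?_, ?_⟩
    · refine myAppendPath hq1 (hC1.dropUntil ht).reverse (fun u hu hu' => ?_)
      rw [support_reverse, List.mem_reverse] at hu'
      have huC1 : u ∈ C1.support := C1.support_dropUntil_subset ht hu'
      rw [mem_support_append_iff] at hu
      rcases hu with hu | hu
      · exact absurd (hintC u huC1 hu ▸ hu') hsF
      · exact hfC1 u huC1 (hW2s u hu)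
    · rw [length_append, length_append]
      omega
  -- generic construction when the connector from t hits the cycle at a fan endpoint
  have zOnCyc : ∀ (y1 y2 : V) (C1 : G.Walk s y1) (C2 : G.Walk s y2), y1 ≠ y2 →
      y1 ∈ c.support → y2 ∈ c.support → C1.IsPath → C2.IsPath →
      (∀ u ∈ C1.support, u ∈ c.support → u = y1) →
      (∀ u ∈ C2.support, u ∈ c.support → u = y2) →
      (∀ u, u ∈ C1.support → u ∈ C2.support → u = s) →
      ∀ (B : G.Walk t y1), B.IsPath →
      (∀ b ∈ B.support, (b ∈ c.support ∨ b ∈ C1.support ∨ b ∈ C2.support) → b = y1) →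
      ∃ p : G.Walk s t, p.IsPath ∧ (c.length + 1) / 2 ≤ p.length := by
    intro y1 y2 C1 C2 hy12 hy1 hy2 hC1 hC2 hfC1 hfC2 hintC B hB hBU
    obtain ⟨W2, hW2, hW2s, hW2l⟩ := myArcA hc hy2 hy1 (Ne.symm hy12)
    have hq1 : (C2.append W2).IsPath := by
      refine myAppendPath hC2 hW2 (fun u hu hu' => ?_)
      exact hfC2 u hu (hW2s u hu')
    refine ⟨(C2.append W2).append B.reverse, ?_, ?_⟩
    · refine myAppendPath hq1 hB.reverse (fun u hu hu' => ?_)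
      rw [support_reverse, List.mem_reverse] at hu'
      rw [mem_support_append_iff] at hu
      rcases hu with hu | hu
      · have := hBU u hu' (Or.inr (Or.inr hu))
        subst this
        exact absurd (hfC2 u hu hy1) hy12
      · exact hBU u hu' (Or.inl (hW2s u hu))
    · rw [length_append, length_append]
      omega
  -- generic construction when the connector from t hits a fan path off the cycle
  have zFan : ∀ (y1 y2 : V) (C1 : G.Walk s y1) (C2 : G.Walk s y2), y1 ≠ y2 →
      y1 ∈ c.support → y2 ∈ c.support → C1.IsPath → C2.IsPath →
      (∀ u ∈ C1.support, u ∈ c.support → u = y1) →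
      (∀ u ∈ C2.support, u ∈ c.support → u = y2) →
      (∀ u, u ∈ C1.support → u ∈ C2.support → u = s) →
      ∀ (z : V) (B : G.Walk t z), B.IsPath → z ∈ C1.support → z ∉ c.support →
      (∀ b ∈ B.support, (b ∈ c.support ∨ b ∈ C1.support ∨ b ∈ C2.support) → b = z) →
      s ∉ B.support →
      ∃ p : G.Walk s t, p.IsPath ∧ (c.length + 1) / 2 ≤ p.length := by
    intro y1 y2 C1 C2 hy12 hy1 hy2 hC1 hC2 hfC1 hfC2 hintC z B hB hzC1 hzS hBU hsB
    obtain ⟨W1, hW1, hW1s, hW1l⟩ := myArcA hc hy1 hy2 hy12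
    have hzs : z ≠ s := fun e => hsB (e ▸ B.end_mem_support)
    have hsD : s ∉ (C1.dropUntil z hzC1).support := by
      intro hcon
      exact hzs (mySplitDisj hC1 hzC1 s (C1.takeUntil z hzC1).start_mem_support hcon).symm
    have hq1 : (B.append (C1.dropUntil z hzC1)).IsPath := by
      refine myAppendPath hB (hC1.dropUntil hzC1) (fun b hb hb' => ?_)
      exact hBU b hb (Or.inr (Or.inl (C1.support_dropUntil_subset hzC1 hb')))
    have hq2 : ((B.append (C1.dropUntil z hzC1)).append W1).IsPath := by
      refine myAppendPath hq1 hW1 (fun u hu hu' => ?_)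
      rw [mem_support_append_iff] at hu
      rcases hu with hu | hu
      · exact absurd ((hBU u hu (Or.inl (hW1s u hu'))) ▸ hW1s u hu') hzS
      · exact hfC1 u (C1.support_dropUntil_subset hzC1 hu) (hW1s u hu')
    have hq : (((B.append (C1.dropUntil z hzC1)).append W1).append C2.reverse).IsPath := by
      refine myAppendPath hq2 hC2.reverse (fun u hu hu' => ?_)
      rw [support_reverse, List.mem_reverse] at hu'
      rw [mem_support_append_iff, mem_support_append_iff] at hu
      rcases hu with (hu | hu) | hu
      · have := hBU u hu (Or.inr (Or.inr hu'))
        subst this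
        exact absurd (hintC u hzC1 hu') hzs
      · have := hintC u (C1.support_dropUntil_subset hzC1 hu) hu'
        subst this
        exact absurd hu hsD
      · exact hfC2 u hu' (hW1s u hu)
    refine ⟨(((B.append (C1.dropUntil z hzC1)).append W1).append C2.reverse).reverse,
      hq.reverse, ?_⟩
    · rw [length_reverse, length_append, length_append, length_append]
      omega
  by_cases ht1 : t ∈ A1.support
  · exact onFan x1 x2 A1 A2 h12 hx1S hx2S hA1 hA2 hf1 hf2 hint ht1
  · by_cases ht2 : t ∈ A2.support
    · exact onFan x2 x1 A2 A1 (Ne.symm h12) hx2S hx1S hA2 hA1 hf2 hf1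
        (fun u hu hu' => hint u hu' hu) ht2
    · obtain ⟨Q0, hQ0, hsQ0⟩ := myAvoid h2 s t x1 (Ne.symm hst)
        (fun e => hsS (e ▸ hx1S))
      obtain ⟨z, B, hB, hz, hfirst, hsub⟩ :=
        myFirstHit (fun b => b ∈ c.support ∨ b ∈ A1.support ∨ b ∈ A2.support) Q0 hQ0
          (Or.inl hx1S)
      have hsB : s ∉ B.support := fun hcon => hsQ0 (hsub s hcon)
      by_cases hzS : z ∈ c.support
      · by_cases hz1 : z = x1
        · subst hz1
          exact zOnCyc z x2 A1 A2 h12 hx1S hx2S hA1 hA2 hf1 hf2 hint B hB hfirst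
        · by_cases hz2 : z = x2
          · subst hz2
            exact zOnCyc z x1 A2 A1 (Ne.symm h12) hx2S hx1S hA2 hA1 hf2 hf1
              (fun u hu hu' => hint u hu' hu) B hB
              (fun b hb hd => hfirst b hb
                (Or.elim hd Or.inl (fun h' => Or.elim h'
                  (fun h2' => Or.inr (Or.inr h2')) (fun h2' => Or.inr (Or.inl h2')))))
          · obtain ⟨z', W, hz', hW, hWs, hWl⟩ := myArcB hc hzS hx1S hx2S hz1 hz2 h12
            have finish : ∀ (y' : V) (C' : G.Walk s y') (W' : G.Walk z y'),
                C'.IsPath → (∀ u ∈ C'.support, u ∈ c.support → u = y') →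
                (∀ u, u ∈ C'.support → u ∈ B.support → False) →
                W'.IsPath → (∀ u ∈ W'.support, u ∈ c.support) →
                (c.length + 1) / 2 ≤ W'.length →
                ∃ p : G.Walk s t, p.IsPath ∧ (c.length + 1) / 2 ≤ p.length := by
              intro y' C' W' hC' hfC' hCB hW' hW's hW'l
              have hq1 : (C'.append W'.reverse).IsPath := by
                refine myAppendPath hC' hW'.reverse (fun u hu hu' => ?_)
                rw [support_reverse, List.mem_reverse] at hu'
                exact hfC' u hu (hW's u hu')
              refine ⟨(C'.append W'.reverse).append B.reverse, ?_, ?_⟩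
              · refine myAppendPath hq1 hB.reverse (fun u hu hu' => ?_)
                rw [support_reverse, List.mem_reverse] at hu'
                rw [mem_support_append_iff] at hu
                rcases hu with hu | hu
                · exact absurd hu' (fun hcon => hCB u hu hcon)
                · rw [support_reverse, List.mem_reverse] at hu
                  exact hfirst u hu' (Or.inl (hW's u hu))
              · rw [length_append, length_append, length_reverse]
                omega
            have hCB1 : ∀ u, u ∈ A1.support → u ∈ B.support → False := by
              intro u hu hcon
              have := hfirst u hcon (Or.inr (Or.inl hu))
              subst this
              exact hz1 (hf1 u hu hzS)
            have hCB2 : ∀ u, u ∈ A2.support → u ∈ B.support → False := by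
              intro u hu hcon
              have := hfirst u hcon (Or.inr (Or.inr hu))
              subst this
              exact hz2 (hf2 u hu hzS)
            rcases hz' with rfl | rfl
            · exact finish z' A1 W hA1 hf1 hCB1 hW hWs hWl
            · exact finish z' A2 W hA2 hf2 hCB2 hW hWs hWl
      · rcases hz with hz | hz | hz
        · exact absurd hz hzS
        · exact zFan x1 x2 A1 A2 h12 hx1S hx2S hA1 hA2 hf1 hf2 hint z B hB hz hzS
            hfirst hsB
        · exact zFan x2 x1 A2 A1 (Ne.symm h12) hx2S hx1S hA2 hA1 hf2 hf1
            (fun u hu hu' => hint u hu' hu) z B hB hz hzS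
            (fun b hb hd => hfirst b hb
              (Or.elim hd Or.inl (fun h' => Or.elim h'
                (fun h2' => Or.inr (Or.inr h2')) (fun h2' => Or.inr (Or.inl h2'))))) hsB

end Aux

/-- If a 2-connected graph contains a cycle on `k` vertices, then between any pair of
distinct vertices there is a path of length at least `⌈k/2⌉`. -/
theorem stmt_6 {V : Type*} [Fintype V] (G : SimpleGraph V) (h2 : TwoConnected G)
    (k : ℕ) (hcyc : ∃ (v : V) (c : G.Walk v v), c.IsCycle ∧ c.length = k) :
    ∀ s t : V, s ≠ t → ∃ p : G.Walk s t, p.IsPath ∧ (k + 1) / 2 ≤ p.length := by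
  classical
  obtain ⟨v, c, hc, hk⟩ := hcyc
  subst hk
  intro s t hst
  by_cases hsS : s ∈ c.support
  · by_cases htS : t ∈ c.support
    · obtain ⟨W, hW, _, hWl⟩ := myArcA hc hsS htS hst
      exact ⟨W, hW, hWl⟩
    · exact myStep2 h2 hc hsS htS hst
  · by_cases htS : t ∈ c.support
    · obtain ⟨p, hp, hl⟩ := myStep2 h2 hc htS hsS (Ne.symm hst)
      exact ⟨p.reverse, hp.reverse, by rwa [SimpleGraph.Walk.length_reverse]⟩
    · exact myStep4 h2 hc hsS htS hst
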